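/- Let K be a field with a field topology τ. Then τ is gt-henselian if and only if the following simple-root stability holds: whenever α ∈ K is a simple root of a monic polynomial f ∈ K[X] of degree n (i.e., f(α) = 0 and f′(α) ≠ 0) and P ⊆ K is a τ-neighbourhood of α, there is a neighbourhood O ⊆ Kⁿ (in the product topology) of the coefficient tuple (a₀, …, a_{n−1}) of f = Xⁿ + a_{n−1}X^{n−1} + … + a₀ such that every monic polynomial of degree n whose coefficient tuple lies in O has a simple root in P. -/

import Mathlib

open Topology Polynomial

/-- A field topology is gt-henselian if for every `n ≥ 1` and every neighbourhood `P` of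
`−1` there is a neighbourhood `O` of `0` such that for all `a₀, …, a_{n−1} ∈ O` the
polynomial `X^{n+1} + X^n + a_{n−1}X^{n−1} + … + a₁X + a₀` has a root in `P`. -/
def GtHenselian (K : Type*) [Field K] [TopologicalSpace K] : Prop :=
  ∀ n : ℕ, 1 ≤ n → ∀ P ∈ nhds (-1 : K), ∃ O ∈ nhds (0 : K),
    ∀ a : ℕ → K, (∀ i < n, a i ∈ O) →
      ∃ x ∈ P, x ^ (n + 1) + x ^ n + ∑ i ∈ Finset.range n, a i * x ^ i = 0

section Helpers
variable {K : Type*} [Field K]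

noncomputable def polyOf (n : ℕ) (v : Fin n → K) : K[X] :=
  X ^ n + ∑ i : Fin n, C (v i) * X ^ (i : ℕ)

lemma polyOf_tail_degree_lt (n : ℕ) (v : Fin n → K) :
    (∑ i : Fin n, C (v i) * X ^ (i : ℕ)).degree < (n : WithBot ℕ) := by
  refine lt_of_le_of_lt (Polynomial.degree_sum_le _ _) ?_
  rw [Finset.sup_lt_iff (by exact_mod_cast WithBot.bot_lt_coe n)]
  intro i _
  exact lt_of_le_of_lt (Polynomial.degree_C_mul_X_pow_le _ _) (by exact_mod_cast i.isLt)

lemma polyOf_monic (n : ℕ) (v : Fin n → K) : (polyOf n v).Monic :=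
  Polynomial.monic_X_pow_add (polyOf_tail_degree_lt n v)

lemma polyOf_natDegree (n : ℕ) (v : Fin n → K) : (polyOf n v).natDegree = n := by
  have h : (polyOf n v).degree = n := by
    rw [polyOf, Polynomial.degree_add_eq_left_of_degree_lt]
    · exact Polynomial.degree_X_pow n
    · rw [Polynomial.degree_X_pow]; exact polyOf_tail_degree_lt n v
  exact Polynomial.natDegree_eq_of_degree_eq_some h

lemma polyOf_coeff_lt (n : ℕ) (v : Fin n → K) {j : ℕ} (hj : j < n) :
    (polyOf n v).coeff j = v ⟨j, hj⟩ := by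
  rw [polyOf, Polynomial.coeff_add, Polynomial.coeff_X_pow, if_neg (by omega),
    Polynomial.finset_sum_coeff]
  rw [Finset.sum_eq_single (⟨j, hj⟩ : Fin n)]
  · simp
  · intro i _ hne
    rw [Polynomial.coeff_C_mul, Polynomial.coeff_X_pow, if_neg, mul_zero]
    intro h; apply hne; exact Fin.ext h.symm
  · simp

lemma polyOf_coeff_self (n : ℕ) (v : Fin n → K) : (polyOf n v).coeff n = 1 := by
  rw [polyOf, Polynomial.coeff_add, Polynomial.coeff_X_pow, if_pos rfl,
    Polynomial.finset_sum_coeff, Finset.sum_eq_zero, add_zero]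
  intro i _
  rw [Polynomial.coeff_C_mul, Polynomial.coeff_X_pow, if_neg (by omega), mul_zero]

lemma polyOf_coeffs (n : ℕ) (g : K[X]) (hg : g.Monic) (hdeg : g.natDegree = n) :
    polyOf n (fun i : Fin n => g.coeff i) = g := by
  ext j
  rcases lt_trichotomy j n with h | h | h
  · rw [polyOf_coeff_lt n _ h]
  · subst h
    rw [polyOf_coeff_self, ← hdeg]
    exact hg.coeff_natDegree.symm
  · rw [Polynomial.coeff_eq_zero_of_natDegree_lt (by rw [polyOf_natDegree]; exact h),
      Polynomial.coeff_eq_zero_of_natDegree_lt (by rw [hdeg]; exact h)]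

lemma polyOf_eval (n : ℕ) (v : Fin n → K) (y : K) :
    (polyOf n v).eval y = y ^ n + ∑ i : Fin n, v i * y ^ (i : ℕ) := by
  simp [polyOf, Polynomial.eval_finset_sum]

lemma polyOf_derivative_eval (n : ℕ) (v : Fin n → K) (y : K) :
    (polyOf n v).derivative.eval y
      = (n : K) * y ^ (n - 1) + ∑ i : Fin n, (i : K) * (v i * y ^ ((i : ℕ) - 1)) := by
  rw [polyOf, Polynomial.derivative_add, Polynomial.derivative_X_pow, map_sum]
  rw [Polynomial.eval_add, Polynomial.eval_mul, Polynomial.eval_C, Polynomial.eval_pow,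
    Polynomial.eval_X, Polynomial.eval_finset_sum]
  congr 1
  apply Finset.sum_congr rfl
  intro i _
  rw [Polynomial.derivative_C_mul, Polynomial.derivative_X_pow]
  simp; ring

lemma taylor_polyOf_coeff (α : K) (n : ℕ) (v : Fin n → K) (k : ℕ) :
    (taylor α (polyOf n v)).coeff k
      = (taylor α (X ^ n : K[X])).coeff k
        + ∑ i : Fin n, v i * (taylor α (X ^ (i : ℕ) : K[X])).coeff k := by
  rw [polyOf, map_add, map_sum, Polynomial.coeff_add, Polynomial.finset_sum_coeff]
  congr 1
  apply Finset.sum_congr rfl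
  intro i _
  rw [Polynomial.C_mul', map_smul, Polynomial.coeff_smul, smul_eq_mul]

lemma taylor_monic_coeff_top (α : K) (n : ℕ) (g : K[X]) (hg : g.Monic)
    (hdeg : g.natDegree = n) : (taylor α g).coeff n = 1 := by
  have h1 : (taylor α g).natDegree = n := by rw [Polynomial.natDegree_taylor, hdeg]
  have h2 : (taylor α g).coeff n = (taylor α g).leadingCoeff := by
    rw [Polynomial.leadingCoeff, h1]
  rw [h2, Polynomial.taylor_apply, Polynomial.leadingCoeff_comp (by simp)]
  simp [hg.leadingCoeff]

lemma keyIdentity (n : ℕ) (hn : 2 ≤ n) (h : K[X]) (hd : h.natDegree < n + 1)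
    (hc1 : h.coeff 1 ≠ 0) (w : K) (hw : w ≠ 0) :
    h.eval (h.coeff 0 / h.coeff 1 * w⁻¹)
      = h.coeff 0 * w⁻¹ ^ n *
        (w ^ n + w ^ (n - 1) + ∑ i ∈ Finset.range (n - 1),
          h.coeff (n - i) * h.coeff 0 ^ (n - i - 1) / h.coeff 1 ^ (n - i) * w ^ i) := by
  have hx : w⁻¹ * w = 1 := inv_mul_cancel₀ hw
  set x := w⁻¹ with hxdef
  set c0 := h.coeff 0 with hc0def
  set c1 := h.coeff 1 with hc1def
  set e := c0 / c1 with hedef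
  have hce : c1 * e = c0 := by rw [hedef]; field_simp
  rw [Polynomial.eval_eq_sum_range' hd]
  rw [← Finset.sum_range_add_sum_Ico _ (by omega : 2 ≤ n + 1)]
  rw [Finset.sum_range_succ, Finset.sum_range_one]
  rw [mul_add, mul_add, Finset.mul_sum]
  have h1 : c0 * x ^ n * w ^ n = c0 * (e * x) ^ 0 := by
    have hxw : x ^ n * w ^ n = 1 := by rw [← mul_pow, hx, one_pow]
    rw [mul_assoc, hxw, pow_zero, mul_one]
  have h2 : c0 * x ^ n * w ^ (n - 1) = c1 * e * x := by
    rw [hce]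
    have : x ^ n = x * x ^ (n - 1) := by
      rw [← pow_succ']; congr 1; omega
    rw [this, mul_assoc c0, mul_assoc, ← mul_pow, hx, one_pow, mul_one]
  have key : ∀ k, 2 ≤ k → k ≤ n →
      c0 * x ^ n * (h.coeff k * c0 ^ (k - 1) / c1 ^ k * w ^ (n - k))
        = h.coeff k * (e * x) ^ k := by
    intro k hk2 hkn
    have hxw : x ^ n * w ^ (n - k) = x ^ k := by
      have hsplit : x ^ n = x ^ k * x ^ (n - k) := by rw [← pow_add]; congr 1; omega
      rw [hsplit, mul_assoc, ← mul_pow, hx, one_pow, mul_one]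
    have hc0p : c0 * c0 ^ (k - 1) = c0 ^ k := by
      rw [← pow_succ']; congr 1; omega
    have hmain : c0 * x ^ n * (h.coeff k * c0 ^ (k - 1) * w ^ (n - k))
        = h.coeff k * c0 ^ k * x ^ k := by
      rw [show c0 * x ^ n * (h.coeff k * c0 ^ (k - 1) * w ^ (n - k))
          = h.coeff k * (c0 * c0 ^ (k - 1)) * (x ^ n * w ^ (n - k)) by ring, hc0p, hxw]
    calc c0 * x ^ n * (h.coeff k * c0 ^ (k - 1) / c1 ^ k * w ^ (n - k))
        = c0 * x ^ n * (h.coeff k * c0 ^ (k - 1) * w ^ (n - k)) / c1 ^ k := by ring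
      _ = h.coeff k * c0 ^ k * x ^ k / c1 ^ k := by rw [hmain]
      _ = h.coeff k * (e * x) ^ k := by rw [mul_pow, hedef, div_pow]; ring
  have h3 : ∑ i ∈ Finset.range (n - 1), c0 * x ^ n * (h.coeff (n - i) * c0 ^ (n - i - 1) / c1 ^ (n - i) * w ^ i)
      = ∑ k ∈ Finset.Ico 2 (n + 1), h.coeff k * (e * x) ^ k := by
    refine Finset.sum_bij' (fun i _ => n - i) (fun k _ => n - k) ?_ ?_ ?_ ?_ ?_
    · intro i hi; simp only [Finset.mem_range] at hi; simp only [Finset.mem_Ico]; omega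
    · intro k hk; simp only [Finset.mem_Ico] at hk; simp only [Finset.mem_range]; omega
    · intro i hi; simp only [Finset.mem_range] at hi; show n - (n - i) = i; omega
    · intro k hk; simp only [Finset.mem_Ico] at hk; show n - (n - k) = k; omega
    · intro i hi
      simp only [Finset.mem_range] at hi
      show c0 * x ^ n * (h.coeff (n - i) * c0 ^ (n - i - 1) / c1 ^ (n - i) * w ^ i)
        = h.coeff (n - i) * (e * x) ^ (n - i)
      have h' := key (n - i) (by omega) (by omega)
      rw [show n - (n - i) = i from by omega] at h'
      exact h'
  rw [h1, h2, h3]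
  ring

end Helpers

section Main
open Filter

set_option linter.unusedSectionVars false

variable {K : Type*} [Field K] [TopologicalSpace K] [IsTopologicalRing K]

lemma backward_aux
    (hstab : ∀ (n : ℕ) (f : K[X]), f.Monic → f.natDegree = n →
        ∀ α : K, f.eval α = 0 → f.derivative.eval α ≠ 0 →
          ∀ P ∈ nhds α,
            ∃ O ∈ nhds (fun i : Fin n => f.coeff i),
              ∀ g : K[X], g.Monic → g.natDegree = n →
                (fun i : Fin n => g.coeff i) ∈ O →
                ∃ β ∈ P, g.eval β = 0 ∧ g.derivative.eval β ≠ 0) :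
    GtHenselian K := by
  intro n hn P hP
  set v₁ : Fin (n + 1) → K := fun i => if (i : ℕ) = n then 1 else 0 with hv₁
  set f := polyOf (n + 1) v₁ with hf
  have hmono := polyOf_monic (n + 1) v₁
  have hdeg := polyOf_natDegree (n + 1) v₁
  have hsum : ∀ y : K, ∑ i : Fin (n + 1), v₁ i * y ^ (i : ℕ) = y ^ n := by
    intro y
    rw [Finset.sum_eq_single (⟨n, by omega⟩ : Fin (n + 1))]
    · simp [hv₁]
    · intro i _ hne
      have hi : (i : ℕ) ≠ n := fun h => hne (Fin.ext h)
      simp [hv₁, hi]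
    · simp
  have heval : f.eval (-1) = 0 := by
    rw [hf, polyOf_eval, hsum, pow_succ]
    ring
  have hder : f.derivative.eval (-1) ≠ 0 := by
    rw [hf, polyOf_derivative_eval]
    have hsum2 : ∑ i : Fin (n + 1), ((i : ℕ) : K) * (v₁ i * (-1 : K) ^ ((i : ℕ) - 1))
        = (n : K) * (-1 : K) ^ (n - 1) := by
      rw [Finset.sum_eq_single (⟨n, by omega⟩ : Fin (n + 1))]
      · simp [hv₁]
      · intro i _ hne
        have hi : (i : ℕ) ≠ n := fun h => hne (Fin.ext h)
        simp [hv₁, hi]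
      · simp
    rw [hsum2]
    rw [show n + 1 - 1 = n from by omega]
    rw [show ((-1 : K)) ^ n = (-1) ^ (n - 1) * (-1) from by
      rw [← pow_succ]; congr 1; omega]
    rw [show (↑(n + 1) : K) * ((-1 : K) ^ (n - 1) * (-1)) + ↑n * (-1 : K) ^ (n - 1)
        = -((-1 : K) ^ (n - 1)) from by push_cast; ring]
    exact neg_ne_zero.2 (pow_ne_zero _ (neg_ne_zero.2 one_ne_zero))
  obtain ⟨O, hO, hprop⟩ := hstab (n + 1) f hmono hdeg (-1) heval hder P hP
  have hcoeffs : (fun i : Fin (n + 1) => f.coeff i) = v₁ := by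
    funext i
    rw [hf, polyOf_coeff_lt (n + 1) v₁ i.isLt]
  rw [hcoeffs, nhds_pi, Filter.mem_pi] at hO
  obtain ⟨I, _, t, ht, hsub⟩ := hO
  set s : Fin (n + 1) → Set K := fun i => if (i : ℕ) = n then Set.univ else t i with hs
  have hsmem : ∀ i, s i ∈ nhds (0 : K) := by
    intro i
    by_cases h : (i : ℕ) = n
    · simp [hs, h]
    · have h2 := ht i
      have h3 : v₁ i = 0 := by simp [hv₁, h]
      rw [h3] at h2
      simpa [hs, h] using h2
  refine ⟨⋂ i, s i, Filter.iInter_mem.2 hsmem, ?_⟩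
  intro a ha
  set u : Fin (n + 1) → K := fun i => if (i : ℕ) = n then 1 else a i with hu
  have huO : u ∈ O := by
    apply hsub
    intro i _
    by_cases h : (i : ℕ) = n
    · have h1 : u i = v₁ i := by simp [hu, hv₁, h]
      rw [h1]
      exact mem_of_mem_nhds (ht i)
    · have hin : (i : ℕ) < n := by omega
      have h1 : u i = a i := by simp [hu, h]
      rw [h1]
      have h2 := Set.mem_iInter.1 (ha (i : ℕ) hin) i
      simpa [hs, h] using h2
  set g := polyOf (n + 1) u with hg
  have hgcoeffs : (fun i : Fin (n + 1) => g.coeff i) = u := by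
    funext i
    rw [hg, polyOf_coeff_lt (n + 1) u i.isLt]
  obtain ⟨β, hβP, hβ0, _⟩ := hprop g (polyOf_monic _ _) (polyOf_natDegree _ _)
    (by rw [hgcoeffs]; exact huO)
  refine ⟨β, hβP, ?_⟩
  rw [hg, polyOf_eval] at hβ0
  have hsplit : ∑ i : Fin (n + 1), u i * β ^ (i : ℕ)
      = β ^ n + ∑ i ∈ Finset.range n, a i * β ^ i := by
    rw [Fin.sum_univ_castSucc]
    have hlast : u (Fin.last n) * β ^ ((Fin.last n : Fin (n + 1)) : ℕ) = β ^ n := by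
      simp [hu, Fin.val_last]
    have hcs : ∀ i : Fin n,
        u i.castSucc * β ^ ((i.castSucc : Fin (n + 1)) : ℕ) = a i * β ^ (i : ℕ) := by
      intro i
      have h1 : ((i.castSucc : Fin (n + 1)) : ℕ) = (i : ℕ) := rfl
      have h2 : u i.castSucc = a i := by
        simp only [hu, h1]
        rw [if_neg (by omega : (i : ℕ) ≠ n)]
      rw [h1, h2]
    rw [hlast, Finset.sum_congr rfl fun i _ => hcs i,
      Fin.sum_univ_eq_sum_range (fun i => a i * β ^ i) n]
    ring
  rw [hsplit] at hβ0
  calc β ^ (n + 1) + β ^ n + ∑ i ∈ Finset.range n, a i * β ^ i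
      = β ^ (n + 1) + (β ^ n + ∑ i ∈ Finset.range n, a i * β ^ i) := by ring
    _ = 0 := hβ0

end Main

section Fwd
open Filter

set_option linter.unusedSectionVars false

variable {K : Type*} [Field K] [TopologicalSpace K] [IsTopologicalRing K]
  [ContinuousInv₀ K] [T2Space K]

lemma forward_aux (hgt : GtHenselian K) :
    ∀ (n : ℕ) (f : K[X]), f.Monic → f.natDegree = n →
        ∀ α : K, f.eval α = 0 → f.derivative.eval α ≠ 0 →
          ∀ P ∈ nhds α,
            ∃ O ∈ nhds (fun i : Fin n => f.coeff i),
              ∀ g : K[X], g.Monic → g.natDegree = n →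
                (fun i : Fin n => g.coeff i) ∈ O →
                ∃ β ∈ P, g.eval β = 0 ∧ g.derivative.eval β ≠ 0 := by
  intro n f hf hdeg α hα hα' P hP
  rcases Nat.lt_or_ge n 2 with hn2 | hn2
  · interval_cases n
    · exfalso
      have h1 : f = 1 := hf.natDegree_eq_zero.1 hdeg
      rw [h1] at hα
      simp at hα
    · -- n = 1
      have hfrep := polyOf_coeffs 1 f hf hdeg
      have hf0 : f.coeff 0 = -α := by
        have h1 := polyOf_eval 1 (fun i : Fin 1 => f.coeff i) α
        rw [hfrep] at h1
        rw [h1] at hα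
        simp only [pow_one, Fin.sum_univ_one, Fin.val_zero, pow_zero, mul_one] at hα
        linear_combination hα
      refine ⟨(fun v : Fin 1 → K => -(v 0)) ⁻¹' P, ?_, ?_⟩
      · apply ContinuousAt.preimage_mem_nhds
        · exact ((continuous_apply (0 : Fin 1)).neg).continuousAt
        · rw [show -((fun i : Fin 1 => f.coeff (i : ℕ)) 0) = α from by
            simp only [Fin.val_zero]; rw [hf0, neg_neg]]
          exact hP
      · intro g hg hgdeg hgO
        have hgrep := polyOf_coeffs 1 g hg hgdeg
        refine ⟨-(g.coeff 0), hgO, ?_, ?_⟩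
        · have h1 := polyOf_eval 1 (fun i : Fin 1 => g.coeff i) (-(g.coeff 0))
          rw [hgrep] at h1
          rw [h1]
          simp
        · have h1 := polyOf_derivative_eval 1 (fun i : Fin 1 => g.coeff i) (-(g.coeff 0))
          rw [hgrep] at h1
          rw [h1]
          simp
  · -- n ≥ 2
    set v₀ : Fin n → K := fun i => f.coeff i with hv₀
    have hfrep : polyOf n v₀ = f := polyOf_coeffs n f hf hdeg
    set c : ℕ → (Fin n → K) → K := fun k v => ((Polynomial.taylor α) (polyOf n v)).coeff k
      with hcdef
    have hc_cont : ∀ k, Continuous (c k) := by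
      intro k
      simp only [hcdef, taylor_polyOf_coeff]
      exact continuous_const.add (continuous_finset_sum _ fun i _ =>
        (continuous_apply i).mul continuous_const)
    have hc0v₀ : c 0 v₀ = 0 := by
      simp only [hcdef, hfrep]
      rw [Polynomial.taylor_coeff_zero, hα]
    have hc1v₀ : c 1 v₀ = f.derivative.eval α := by
      simp only [hcdef, hfrep]
      rw [Polynomial.taylor_coeff_one]
    have hc1ne : c 1 v₀ ≠ 0 := by rw [hc1v₀]; exact hα'
    set F : (Fin n → K) × K → K := fun p => α + c 0 p.1 / c 1 p.1 * (p.2)⁻¹ with hFdef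
    have hFcont : ContinuousAt F (v₀, -1) := by
      apply ContinuousAt.add continuousAt_const
      apply ContinuousAt.mul
      · exact ContinuousAt.div (((hc_cont 0).comp continuous_fst).continuousAt)
          (((hc_cont 1).comp continuous_fst).continuousAt) hc1ne
      · exact continuous_snd.continuousAt.inv₀ (neg_ne_zero.2 one_ne_zero)
    have hFval : F (v₀, -1) = α := by
      simp only [hFdef, hc0v₀, zero_div, zero_mul, add_zero]
    set G : (Fin n → K) × K → K := fun p =>
      (n : K) * (F p) ^ (n - 1) + ∑ i : Fin n, (i : K) * (p.1 i * (F p) ^ ((i : ℕ) - 1))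
      with hGdef
    have hφ : Continuous (fun q : (Fin n → K) × K =>
        (n : K) * q.2 ^ (n - 1) + ∑ i : Fin n, (i : K) * (q.1 i * q.2 ^ ((i : ℕ) - 1))) := by
      apply Continuous.add
      · exact continuous_const.mul (continuous_snd.pow _)
      · exact continuous_finset_sum _ fun i _ =>
          continuous_const.mul (((continuous_apply i).comp continuous_fst).mul
            (continuous_snd.pow _))
    have hGcont : ContinuousAt G (v₀, -1) := by
      have h1 := hφ.continuousAt.comp
        (ContinuousAt.prodMk continuous_fst.continuousAt hFcont)
      exact h1
    have hGval : G (v₀, -1) = f.derivative.eval α := by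
      simp only [hGdef, hFval]
      rw [← polyOf_derivative_eval n v₀ α, hfrep]
    have hev : ∀ᶠ p in nhds (v₀, (-1 : K)), F p ∈ P ∧ G p ∈ ({0}ᶜ : Set K) := by
      apply Filter.Eventually.and
      · exact hFcont.preimage_mem_nhds (by rw [hFval]; exact hP)
      · exact hGcont.preimage_mem_nhds
          (by rw [hGval]; exact isOpen_compl_singleton.mem_nhds hα')
    rw [nhds_prod_eq, Filter.eventually_prod_iff] at hev
    obtain ⟨pa, hpa, pb, hpb, himp⟩ := hev
    have hP₂ : {w : K | pb w ∧ w ≠ 0} ∈ nhds (-1 : K) :=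
      hpb.and (eventually_ne_nhds (neg_ne_zero.2 one_ne_zero))
    obtain ⟨O', hO', hroot⟩ := hgt (n - 1) (by omega) _ hP₂
    have hbev : ∀ᶠ v in nhds v₀, ∀ i ∈ Finset.range (n - 1),
        c (n - i) v * c 0 v ^ (n - i - 1) / c 1 v ^ (n - i) ∈ O' := by
      rw [Filter.eventually_all_finset]
      intro i hi
      rw [Finset.mem_range] at hi
      have hcont : ContinuousAt
          (fun v => c (n - i) v * c 0 v ^ (n - i - 1) / c 1 v ^ (n - i)) v₀ :=
        ((hc_cont (n - i)).continuousAt.mul ((hc_cont 0).continuousAt.pow _)).div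
          ((hc_cont 1).continuousAt.pow _) (pow_ne_zero _ hc1ne)
      have hval : c (n - i) v₀ * c 0 v₀ ^ (n - i - 1) / c 1 v₀ ^ (n - i) = 0 := by
        rw [hc0v₀, zero_pow (by omega : n - i - 1 ≠ 0), mul_zero, zero_div]
      exact hcont.preimage_mem_nhds (by rw [hval]; exact hO')
    have hc1ev : ∀ᶠ v in nhds v₀, c 1 v ≠ 0 :=
      (hc_cont 1).continuousAt.eventually_ne hc1ne
    refine ⟨{v | pa v ∧ c 1 v ≠ 0 ∧ ∀ i ∈ Finset.range (n - 1),
        c (n - i) v * c 0 v ^ (n - i - 1) / c 1 v ^ (n - i) ∈ O'},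
      hpa.and (hc1ev.and hbev), ?_⟩
    intro g hg hgdeg hgO
    set v : Fin n → K := fun i => g.coeff i with hv
    obtain ⟨hpav, hc1v, hbv⟩ := hgO
    have hgrep : polyOf n v = g := polyOf_coeffs n g hg hgdeg
    obtain ⟨w, hwmem, hwroot⟩ := hroot
      (fun i => c (n - i) v * c 0 v ^ (n - i - 1) / c 1 v ^ (n - i))
      (fun i hi => hbv i (Finset.mem_range.2 hi))
    obtain ⟨hpbw, hw0⟩ := hwmem
    have hFG := himp hpav hpbw
    have hcg : ∀ k, c k v = ((Polynomial.taylor α) g).coeff k := by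
      intro k
      simp only [hcdef, hgrep]
    refine ⟨F (v, w), hFG.1, ?_, ?_⟩
    · have hc1g : ((Polynomial.taylor α) g).coeff 1 ≠ 0 := by
        rw [← hcg 1]; exact hc1v
      have hkey := keyIdentity n hn2 ((Polynomial.taylor α) g)
        (by rw [Polynomial.natDegree_taylor, hgdeg]; omega) hc1g w hw0
      have hFeq : F (v, w)
          = ((Polynomial.taylor α) g).coeff 0 / ((Polynomial.taylor α) g).coeff 1 * w⁻¹ + α := by
        simp only [hFdef]
        rw [← hcg 0, ← hcg 1]
        ring
      rw [hFeq, ← Polynomial.taylor_eval α g, hkey]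
      have hsumeq : ∑ i ∈ Finset.range (n - 1),
          ((Polynomial.taylor α) g).coeff (n - i) * ((Polynomial.taylor α) g).coeff 0 ^ (n - i - 1)
            / ((Polynomial.taylor α) g).coeff 1 ^ (n - i) * w ^ i
          = ∑ i ∈ Finset.range (n - 1),
            c (n - i) v * c 0 v ^ (n - i - 1) / c 1 v ^ (n - i) * w ^ i :=
        Finset.sum_congr rfl fun i _ => by rw [← hcg (n - i), ← hcg 0, ← hcg 1]
      rw [hsumeq]
      rw [show n - 1 + 1 = n from by omega] at hwroot
      rw [hwroot, mul_zero]
    · have hGeq : g.derivative.eval (F (v, w)) = G (v, w) := by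
        rw [← hgrep, polyOf_derivative_eval]
      rw [hGeq]
      exact Set.mem_compl_singleton_iff.1 hFG.2

end Fwd

/-- A field topology is gt-henselian if and only if the following
simple-root stability holds: if `α` is a simple root of a monic polynomial `f` of degree
`n` and `P` is a neighbourhood of `α`, then there is a neighbourhood `O ⊆ Kⁿ` (product
topology) of the coefficient tuple `(a₀, …, a_{n−1})` of `f` such that every monic degree
`n` polynomial whose coefficient tuple lies in `O` has a simple root in `P`. -/
theorem statement12 {K : Type*} [Field K] [TopologicalSpace K]
    [IsTopologicalRing K] [ContinuousInv₀ K] [T2Space K]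
    (hnd : ¬ DiscreteTopology K) :
    GtHenselian K ↔
      ∀ (n : ℕ) (f : K[X]), f.Monic → f.natDegree = n →
        ∀ α : K, f.eval α = 0 → f.derivative.eval α ≠ 0 →
          ∀ P ∈ nhds α,
            ∃ O ∈ nhds (fun i : Fin n => f.coeff i),
              ∀ g : K[X], g.Monic → g.natDegree = n →
                (fun i : Fin n => g.coeff i) ∈ O →
                ∃ β ∈ P, g.eval β = 0 ∧ g.derivative.eval β ≠ 0 := by
  constructor
  · exact forward_aux
  · exact backward_aux
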